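/- Let K be a field trivially ℤ-graded, n a positive integer, and γ_1,…,γ_n arbitrary integers. Let g = min{γ_1,…,γ_n}, k = max{γ_1,…,γ_n} − g, and for 0 ≤ i ≤ k let l_i be the number of indices j with γ_j = g + i. Then l_0 > 0, l_k > 0, l_0 + l_1 + … + l_k = n, and M_n(K)(γ_1,…,γ_n) is graded isomorphic to M_n(K)(0 repeated l_0 times, 1 repeated l_1 times, …, k repeated l_k times). Moreover, these data are unique for the graded isomorphism class: if M_n(K)(0 repeated l_0 times, …, k repeated l_k times) is graded isomorphic to M_n(K)(0 repeated l'_0 times, …, k' repeated l'_{k'} times), where l_1,…,l_{k−1} and l'_1,…,l'_{k'−1} are nonnegative, l_0, l_k, l'_0, l'_{k'} are positive, and both lists of multiplicities sum to n, then k = k' and l_i = l'_i for all i = 0,…,k. -/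

import Mathlib

/-- Degree-`d` component of `Mₙ(K)(γ₁,…,γₙ)` over a trivially ℤ-graded field `K`:
the `K`-linear span of the matrix units `e i j` with `γ i - γ j = d`, i.e. the
matrices vanishing at every position `(i,j)` with `γ i - γ j ≠ d`. -/
def matComp (K : Type*) [Field K] {n : ℕ} (γ : Fin n → ℤ) (d : ℤ) :
    Set (Matrix (Fin n) (Fin n) K) :=
  {x | ∀ i j, γ i - γ j ≠ d → x i j = 0}

/-- `Mₙ(K)(γ₁,…,γₙ)` and `Mₘ(K)(δ₁,…,δₘ)` are graded isomorphic: there is a ring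
isomorphism mapping each degree-`d` component onto the degree-`d` component. -/
def GrIsoMat (K : Type*) [Field K] {n m : ℕ} (γ : Fin n → ℤ) (δ : Fin m → ℤ) : Prop :=
  ∃ φ : Matrix (Fin n) (Fin n) K ≃+* Matrix (Fin m) (Fin m) K,
    ∀ d : ℤ, φ '' matComp K γ d = matComp K δ d

/-- `δ : Fin n → ℤ` is the list `0` repeated `l 0` times, `1` repeated `l 1`
times, …, `k` repeated `l k` times. -/
def IsMultList {n : ℕ} (k : ℕ) (l : ℕ → ℕ) (δ : Fin n → ℤ) : Prop :=
  Monotone δ ∧ (∀ j, 0 ≤ δ j ∧ δ j ≤ (k : ℤ)) ∧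
    ∀ i : ℕ, i ≤ k → (Finset.univ.filter fun j => δ j = (i : ℤ)).card = l i

open Matrix

namespace Stmt3Aux

variable {K : Type*} [Field K] {n : ℕ}

local notation "M" => Matrix (Fin n) (Fin n) K

/-! ### Block submodules and their dimension -/

/-- The block submodule: matrices supported on rows with `δ = p`, columns with `δ = q`. -/
def blockSub (K : Type*) [Field K] {n : ℕ} (δ : Fin n → ℤ) (p q : ℤ) :
    Submodule K (Matrix (Fin n) (Fin n) K) where
  carrier := {x | ∀ i j, ¬(δ i = p ∧ δ j = q) → x i j = 0}
  add_mem' := fun hx hy i j h => by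
    rw [Matrix.add_apply, hx i j h, hy i j h, add_zero]
  zero_mem' := fun i j h => rfl
  smul_mem' := fun c x hx i j h => by
    rw [Matrix.smul_apply, hx i j h, smul_zero]

lemma mem_blockSub {δ : Fin n → ℤ} {p q : ℤ} {x : Matrix (Fin n) (Fin n) K} :
    x ∈ blockSub K δ p q ↔ ∀ i j, ¬(δ i = p ∧ δ j = q) → x i j = 0 := Iff.rfl

noncomputable def blockEquiv (δ : Fin n → ℤ) (p q : ℤ) :
    (blockSub K δ p q) ≃ₗ[K] (({i : Fin n // δ i = p} × {j : Fin n // δ j = q}) → K) where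
  toFun x := fun r => x.1 r.1.1 r.2.1
  map_add' x y := rfl
  map_smul' c x := rfl
  invFun f := ⟨Matrix.of fun i j =>
      if h : δ i = p ∧ δ j = q then f (⟨i, h.1⟩, ⟨j, h.2⟩) else 0,
    fun i j h => dif_neg h⟩
  left_inv x := by
    apply Subtype.ext
    ext i j
    by_cases h : δ i = p ∧ δ j = q
    · simp only [Matrix.of_apply]; rw [dif_pos h]
    · simp only [Matrix.of_apply, dif_neg h]
      exact (x.2 i j h).symm
  right_inv f := by
    funext r
    simp [Matrix.of_apply, dif_pos (And.intro r.1.2 r.2.2)]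

lemma finrank_blockSub (δ : Fin n → ℤ) (p q : ℤ) :
    Module.finrank K (blockSub K δ p q) =
      (Finset.univ.filter fun i => δ i = p).card *
        (Finset.univ.filter fun j => δ j = q).card := by
  rw [(blockEquiv δ p q).finrank_eq, Module.finrank_pi, Fintype.card_prod,
    Fintype.card_subtype, Fintype.card_subtype]

/-! ### Products of components span blocks -/

/-- The set of products of an element of degree `d` and an element of degree `e`. -/
def mulSet (K : Type*) [Field K] {n : ℕ} (δ : Fin n → ℤ) (d e : ℤ) :
    Set (Matrix (Fin n) (Fin n) K) :=
  {z | ∃ x ∈ matComp K δ d, ∃ y ∈ matComp K δ e, z = x * y}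

lemma stdBasisMatrix_mem_matComp {δ : Fin n → ℤ} {r s : Fin n} {d : ℤ} (h : δ r - δ s = d)
    (c : K) : Matrix.single r s c ∈ matComp K δ d := by
  intro i j hij
  apply Matrix.single_apply_of_ne
  rintro ⟨rfl, rfl⟩
  exact hij h

lemma span_mulSet (δ : Fin n → ℤ) (k : ℕ) (hb : ∀ j, 0 ≤ δ j ∧ δ j ≤ (k : ℤ))
    (u0 : Fin n) (hu0 : δ u0 = 0) (q : ℤ) :
    Submodule.span K (mulSet K δ (k : ℤ) (-q)) = blockSub K δ (k : ℤ) q := by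
  apply le_antisymm
  · rw [Submodule.span_le]
    rintro z ⟨x, hx, y, hy, rfl⟩ r s hrs
    rw [Matrix.mul_apply]
    apply Finset.sum_eq_zero
    intro u _
    by_cases hxu : x r u = 0
    · rw [hxu, zero_mul]
    by_cases hyu : y u s = 0
    · rw [hyu, mul_zero]
    exfalso
    have h1 : δ r - δ u = (k : ℤ) := by
      by_contra h; exact hxu (hx r u h)
    have h2 : δ u - δ s = -q := by
      by_contra h; exact hyu (hy u s h)
    have hbr := hb r; have hbu := hb u; have hbs := hb s
    exact hrs ⟨by omega, by omega⟩
  · intro x hx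
    have hxsum := Matrix.matrix_eq_sum_single x
    rw [hxsum]
    apply Submodule.sum_mem
    intro r _
    apply Submodule.sum_mem
    intro s _
    by_cases hxs : x r s = 0
    · rw [hxs, Matrix.single_zero]
      exact Submodule.zero_mem _
    have hrs : δ r = (k : ℤ) ∧ δ s = q := by
      by_contra h; exact hxs (hx r s h)
    apply Submodule.subset_span
    refine ⟨Matrix.single r u0 1, stdBasisMatrix_mem_matComp (by rw [hrs.1, hu0]; ring) 1,
      Matrix.single u0 s (x r s), stdBasisMatrix_mem_matComp (by rw [hrs.2, hu0]; ring) _, ?_⟩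
    rw [Matrix.single_mul_single_same, one_mul]

/-! ### Linearization of a graded ring isomorphism -/

lemma scalar_eq_smul_one (r : K) :
    Matrix.scalar (Fin n) r = r • (1 : M) := by
  ext i j
  by_cases h : i = j <;>
    simp [Matrix.scalar_apply, Matrix.one_apply, Matrix.diagonal_apply, h]

lemma smul_one_inj (hn : 0 < n) {r r' : K} (h : r • (1 : M) = r' • (1 : M)) : r = r' := by
  have := congrFun (congrFun h ⟨0, hn⟩) ⟨0, hn⟩
  simpa [Matrix.smul_apply, Matrix.one_apply] using this

lemma exists_scalar (φ : M ≃+* M) (c : K) :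
    ∃ r : K, φ (c • (1 : M)) = r • (1 : M) := by
  have hmem : φ (c • (1 : M)) ∈ Set.range (Matrix.scalar (Fin n)) := by
    rw [Matrix.mem_range_scalar_iff_commute_single']
    intro i j
    have h1 : Commute (φ.symm (Matrix.single i j 1)) (c • (1 : M)) :=
      (Commute.one_right _).smul_right c
    have h2 := h1.map (φ : M ≃+* M)
    simpa using h2
  obtain ⟨r, hr⟩ := hmem
  exact ⟨r, by rw [← hr, scalar_eq_smul_one]⟩

noncomputable def tauFun (φ : M ≃+* M) : K → K :=
  fun c => Classical.choose (exists_scalar φ c)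

lemma tauFun_spec (φ : M ≃+* M) (c : K) :
    φ (c • (1 : M)) = tauFun φ c • (1 : M) :=
  Classical.choose_spec (exists_scalar φ c)

noncomputable def tauEquiv (hn : 0 < n) (φ : M ≃+* M) : K ≃+* K where
  toFun := tauFun φ
  invFun := tauFun φ.symm
  left_inv c := by
    apply smul_one_inj hn
    rw [← tauFun_spec, ← tauFun_spec, RingEquiv.symm_apply_apply]
  right_inv c := by
    apply smul_one_inj hn
    rw [← tauFun_spec, ← tauFun_spec, RingEquiv.apply_symm_apply]
  map_mul' c d := by
    apply smul_one_inj hn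
    have h1 : ((c * d) • (1 : M)) = (c • (1 : M)) * (d • (1 : M)) := by
      rw [smul_mul_smul_comm, mul_one]
    rw [← tauFun_spec, h1, _root_.map_mul, tauFun_spec, tauFun_spec, smul_mul_smul_comm, mul_one]
  map_add' c d := by
    apply smul_one_inj hn
    rw [← tauFun_spec, add_smul, map_add, tauFun_spec, tauFun_spec, add_smul]

lemma tau_semilinear (hn : 0 < n) (φ : M ≃+* M) (c : K) (x : M) :
    φ (c • x) = tauEquiv hn φ c • φ x := by
  have h1 : c • x = (c • (1 : M)) * x := by rw [smul_mul_assoc, one_mul]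
  have h2 : (tauEquiv hn φ c • (1 : M)) * φ x = tauEquiv hn φ c • φ x := by
    rw [smul_mul_assoc, one_mul]
  rw [h1, _root_.map_mul, tauFun_spec φ c]
  exact h2

/-- The `K`-linearized version of `φ`. -/
noncomputable def psi (hn : 0 < n) (φ : M ≃+* M) : M ≃+* M :=
  φ.trans ((tauEquiv hn φ).symm.mapMatrix)

lemma psi_apply (hn : 0 < n) (φ : M ≃+* M) (x : M) :
    psi hn φ x = (φ x).map (tauEquiv hn φ).symm := rfl

lemma psi_smul (hn : 0 < n) (φ : M ≃+* M) (c : K) (x : M) :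
    psi hn φ (c • x) = c • psi hn φ x := by
  rw [psi_apply, psi_apply, tau_semilinear hn φ]
  ext i j
  simp [Matrix.map_apply, Matrix.smul_apply, _root_.map_mul]

noncomputable def psiL (hn : 0 < n) (φ : M ≃+* M) : M ≃ₗ[K] M :=
  { psi hn φ with
    map_smul' := psi_smul hn φ }

lemma psiL_apply (hn : 0 < n) (φ : M ≃+* M) (x : M) :
    psiL hn φ x = psi hn φ x := rfl

/-! ### Images of components and blocks -/

lemma map_matComp_eq (τ : K ≃+* K) (δ : Fin n → ℤ) (d : ℤ) :
    (RingEquiv.mapMatrix τ : M ≃+* M) '' matComp K δ d = matComp K δ d := by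
  ext z
  constructor
  · rintro ⟨x, hx, rfl⟩ i j hij
    show τ (x i j) = 0
    rw [hx i j hij, map_zero]
  · intro hz
    refine ⟨(RingEquiv.mapMatrix τ.symm : M ≃+* M) z, fun i j hij => ?_, ?_⟩
    · show τ.symm (z i j) = 0
      rw [hz i j hij, map_zero]
    · ext i j
      show τ (τ.symm (z i j)) = z i j
      simp

lemma psi_comp (hn : 0 < n) (φ : M ≃+* M) {δ δ' : Fin n → ℤ}
    (hφ : ∀ d, φ '' matComp K δ d = matComp K δ' d) (d : ℤ) :
    psi hn φ '' matComp K δ d = matComp K δ' d := by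
  have h : psi hn φ '' matComp K δ d
      = (RingEquiv.mapMatrix (tauEquiv hn φ).symm : M ≃+* M) '' (φ '' matComp K δ d) := by
    rw [← Set.image_comp]
    rfl
  rw [h, hφ d, map_matComp_eq]

lemma mulSet_image (ψ : M ≃+* M) {δ δ' : Fin n → ℤ}
    (h : ∀ d, ψ '' matComp K δ d = matComp K δ' d) (d e : ℤ) :
    ψ '' mulSet K δ d e = mulSet K δ' d e := by
  ext z
  constructor
  · rintro ⟨z, ⟨x, hx, y, hy, rfl⟩, rfl⟩
    exact ⟨ψ x, (h d) ▸ Set.mem_image_of_mem _ hx, ψ y, (h e) ▸ Set.mem_image_of_mem _ hy,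
      _root_.map_mul ψ x y⟩
  · rintro ⟨x, hx, y, hy, rfl⟩
    have hx' : ψ.symm x ∈ matComp K δ d := by
      rw [← h d] at hx
      obtain ⟨x0, hx0, rfl⟩ := hx
      simpa using hx0
    have hy' : ψ.symm y ∈ matComp K δ e := by
      rw [← h e] at hy
      obtain ⟨y0, hy0, rfl⟩ := hy
      simpa using hy0
    exact ⟨ψ.symm x * ψ.symm y, ⟨_, hx', _, hy', rfl⟩, by rw [_root_.map_mul]; simp⟩

lemma block_map (hn : 0 < n) (φ : M ≃+* M) {δ δ' : Fin n → ℤ}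
    (hφ : ∀ d, φ '' matComp K δ d = matComp K δ' d) (k : ℕ)
    (hb : ∀ j, 0 ≤ δ j ∧ δ j ≤ (k : ℤ)) (hb' : ∀ j, 0 ≤ δ' j ∧ δ' j ≤ (k : ℤ))
    (u0 : Fin n) (hu0 : δ u0 = 0) (u0' : Fin n) (hu0' : δ' u0' = 0) (q : ℤ) :
    (blockSub K δ (k : ℤ) q).map (psiL hn φ : M →ₗ[K] M) = blockSub K δ' (k : ℤ) q := by
  have hcoe : ⇑(psiL hn φ : M →ₗ[K] M) = ⇑(psi hn φ) := rfl
  rw [← span_mulSet δ k hb u0 hu0 q, Submodule.map_span]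
  rw [show ⇑(psiL hn φ : M →ₗ[K] M) '' mulSet K δ (k : ℤ) (-q) = mulSet K δ' (k : ℤ) (-q) by
    rw [hcoe]; exact mulSet_image (psi hn φ) (psi_comp hn φ hφ) (k : ℤ) (-q)]
  exact span_mulSet δ' k hb' u0' hu0' q

lemma finrank_block_eq (hn : 0 < n) (φ : M ≃+* M) {δ δ' : Fin n → ℤ}
    (hφ : ∀ d, φ '' matComp K δ d = matComp K δ' d) (k : ℕ)
    (hb : ∀ j, 0 ≤ δ j ∧ δ j ≤ (k : ℤ)) (hb' : ∀ j, 0 ≤ δ' j ∧ δ' j ≤ (k : ℤ))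
    (u0 : Fin n) (hu0 : δ u0 = 0) (u0' : Fin n) (hu0' : δ' u0' = 0) (q : ℤ) :
    Module.finrank K (blockSub K δ (k : ℤ) q) = Module.finrank K (blockSub K δ' (k : ℤ) q) := by
  rw [← block_map hn φ hφ k hb hb' u0 hu0 u0' hu0' q, LinearEquiv.finrank_map_eq]

/-! ### The top degree is determined -/

lemma top_le (φ : M ≃+* M) {δ δ' : Fin n → ℤ} {k k'' : ℕ}
    (hφ : ∀ d, φ '' matComp K δ d = matComp K δ' d)
    (hb' : ∀ j, 0 ≤ δ' j ∧ δ' j ≤ (k'' : ℤ))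
    (r0 u0 : Fin n) (hr0 : δ r0 = (k : ℤ)) (hu0 : δ u0 = 0) : k ≤ k'' := by
  have hmem : Matrix.single r0 u0 (1 : K) ∈ matComp K δ (k : ℤ) :=
    stdBasisMatrix_mem_matComp (by omega) 1
  have hz : φ (Matrix.single r0 u0 (1 : K)) ∈ matComp K δ' (k : ℤ) := by
    rw [← hφ]
    exact Set.mem_image_of_mem _ hmem
  have hne : φ (Matrix.single r0 u0 (1 : K)) ≠ 0 := by
    intro h
    have h0 : Matrix.single r0 u0 (1 : K) = 0 := by
      apply φ.injective
      rw [h, map_zero]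
    have := congrFun (congrFun h0 r0) u0
    simp at this
  have hex : ∃ i j, φ (Matrix.single r0 u0 (1 : K)) i j ≠ 0 := by
    by_contra h
    push_neg at h
    exact hne (by ext i j; simpa using h i j)
  obtain ⟨i, j, hij⟩ := hex
  have hd : δ' i - δ' j = (k : ℤ) := by
    by_contra h
    exact hij (hz i j h)
  have h1 := hb' i; have h2 := hb' j
  omega

end Stmt3Aux

open Stmt3Aux in
theorem stmt3 (K : Type*) [Field K] (n : ℕ) (hn : 0 < n) (γ : Fin n → ℤ)
    (g : ℤ) (hg : IsLeast (Set.range γ) g)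
    (k : ℕ) (hk : IsGreatest (Set.range γ) (g + (k : ℤ)))
    (l : ℕ → ℕ)
    (hl : ∀ i : ℕ, l i = (Finset.univ.filter fun j => γ j = g + (i : ℤ)).card) :
    0 < l 0 ∧ 0 < l k ∧ (∑ i ∈ Finset.range (k + 1), l i) = n ∧
    (∃ δ : Fin n → ℤ, IsMultList k l δ ∧ GrIsoMat K γ δ) ∧
    -- uniqueness of the representatives for the graded isomorphism class
    (∀ (k' k'' : ℕ) (a b : ℕ → ℕ) (δ δ' : Fin n → ℤ),
      0 < a 0 → 0 < a k' → 0 < b 0 → 0 < b k'' →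
      (∑ i ∈ Finset.range (k' + 1), a i) = n →
      (∑ i ∈ Finset.range (k'' + 1), b i) = n →
      IsMultList k' a δ → IsMultList k'' b δ' →
      GrIsoMat K δ δ' →
      k' = k'' ∧ ∀ i : ℕ, i ≤ k' → a i = b i) := by
  obtain ⟨j0, hj0⟩ := hg.1
  obtain ⟨j1, hj1⟩ := hk.1
  have hlow : ∀ j, g ≤ γ j := fun j => hg.2 (Set.mem_range_self j)
  have hhigh : ∀ j, γ j ≤ g + (k : ℤ) := fun j => hk.2 (Set.mem_range_self j)
  refine ⟨?_, ?_, ?_, ?_, ?_⟩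
  · -- 0 < l 0
    rw [hl 0]
    apply Finset.card_pos.mpr
    exact ⟨j0, by simp [hj0]⟩
  · -- 0 < l k
    rw [hl k]
    apply Finset.card_pos.mpr
    exact ⟨j1, by simp [hj1]⟩
  · -- sum
    have hsum : (Finset.univ : Finset (Fin n)).card
        = ∑ i ∈ Finset.range (k + 1),
            (Finset.univ.filter fun j => (γ j - g).toNat = i).card := by
      apply Finset.card_eq_sum_card_fiberwise
      intro j _
      have h1 := hlow j; have h2 := hhigh j
      simp only [Finset.mem_coe, Finset.mem_range]
      omega
    have heach : ∀ i ∈ Finset.range (k + 1),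
        (Finset.univ.filter fun j => (γ j - g).toNat = i).card = l i := by
      intro i _
      rw [hl i]
      congr 1
      apply Finset.filter_congr
      intro j _
      have h1 := hlow j
      constructor
      · intro h; omega
      · intro h; omega
    calc (∑ i ∈ Finset.range (k + 1), l i)
        = ∑ i ∈ Finset.range (k + 1),
            (Finset.univ.filter fun j => (γ j - g).toNat = i).card :=
          Finset.sum_congr rfl (fun i hi => (heach i hi).symm)
      _ = (Finset.univ : Finset (Fin n)).card := hsum.symm
      _ = n := by simp
  · -- existence
    set σ : Equiv.Perm (Fin n) := Tuple.sort γ with hσ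
    refine ⟨fun i => γ (σ i) - g, ⟨?_, ?_, ?_⟩, ?_⟩
    · -- monotone
      intro i j hij
      have := Tuple.monotone_sort γ hij
      simp only [Function.comp_apply, ← hσ] at this
      show γ (σ i) - g ≤ γ (σ j) - g
      omega
    · intro j
      have h1 := hlow (σ j); have h2 := hhigh (σ j)
      exact ⟨show (0 : ℤ) ≤ γ (σ j) - g by omega, show γ (σ j) - g ≤ (k : ℤ) by omega⟩
    · intro i _
      rw [hl i]
      have hiff : ∀ j : Fin n, (γ (σ j) - g = (i : ℤ)) ↔ (γ (σ j) = g + (i : ℤ)) := by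
        intro j; omega
      rw [← Fintype.card_subtype, ← Fintype.card_subtype]
      exact Fintype.card_congr (σ.subtypeEquiv (fun j => by rw [hiff j]))
    · -- graded isomorphism
      refine ⟨(Matrix.reindexAlgEquiv K K σ.symm).toRingEquiv, fun d => ?_⟩
      have happ : ∀ (x : Matrix (Fin n) (Fin n) K) (i j : Fin n),
          (Matrix.reindexAlgEquiv K K σ.symm).toRingEquiv x i j = x (σ i) (σ j) := by
        intro x i j
        simp [Matrix.reindexAlgEquiv_apply, Matrix.reindex_apply, Matrix.submatrix_apply]
      ext z
      constructor
      · rintro ⟨x, hx, rfl⟩ i j hij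
        rw [happ]
        apply hx
        intro h
        apply hij
        show γ (σ i) - g - (γ (σ j) - g) = d
        omega
      · intro hz
        refine ⟨(Matrix.reindexAlgEquiv K K σ).toRingEquiv z, fun i' j' h => ?_, ?_⟩
        · have hx : (Matrix.reindexAlgEquiv K K σ).toRingEquiv z i' j'
              = z (σ.symm i') (σ.symm j') := by
            simp [Matrix.reindexAlgEquiv_apply, Matrix.reindex_apply, Matrix.submatrix_apply]
          rw [hx]
          apply hz
          intro hcon
          apply h
          have e1 : γ (σ (σ.symm i')) = γ i' := by rw [Equiv.apply_symm_apply]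
          have e2 : γ (σ (σ.symm j')) = γ j' := by rw [Equiv.apply_symm_apply]
          have hcon' : γ (σ (σ.symm i')) - g - (γ (σ (σ.symm j')) - g) = d := hcon
          omega
        · ext i j
          rw [happ]
          simp [Matrix.reindexAlgEquiv_apply, Matrix.reindex_apply, Matrix.submatrix_apply]
  · -- uniqueness
    intro k' k'' a b δ δ' ha0 hak hb0 hbk hsa hsb hA hB hiso
    obtain ⟨φ, hφ⟩ := hiso
    obtain ⟨hAmono, hAb, hAc⟩ := hA
    obtain ⟨hBmono, hBb, hBc⟩ := hB
    -- witnesses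
    have hu0 : ∃ u, δ u = 0 := by
      have := hAc 0 (Nat.zero_le _)
      rw [← this] at ha0
      obtain ⟨u, hu⟩ := Finset.card_pos.mp ha0
      exact ⟨u, by simpa using (Finset.mem_filter.mp hu).2⟩
    have hr0 : ∃ r, δ r = (k' : ℤ) := by
      have := hAc k' le_rfl
      rw [← this] at hak
      obtain ⟨r, hr⟩ := Finset.card_pos.mp hak
      exact ⟨r, (Finset.mem_filter.mp hr).2⟩
    have hu0' : ∃ u, δ' u = 0 := by
      have := hBc 0 (Nat.zero_le _)
      rw [← this] at hb0
      obtain ⟨u, hu⟩ := Finset.card_pos.mp hb0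
      exact ⟨u, by simpa using (Finset.mem_filter.mp hu).2⟩
    have hr0' : ∃ r, δ' r = (k'' : ℤ) := by
      have := hBc k'' le_rfl
      rw [← this] at hbk
      obtain ⟨r, hr⟩ := Finset.card_pos.mp hbk
      exact ⟨r, (Finset.mem_filter.mp hr).2⟩
    obtain ⟨u0, hu0⟩ := hu0
    obtain ⟨r0, hr0⟩ := hr0
    obtain ⟨u0', hu0'⟩ := hu0'
    obtain ⟨r0', hr0'⟩ := hr0'
    -- the symmetric component condition
    have hφsymm : ∀ d, φ.symm '' matComp K δ' d = matComp K δ d := by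
      intro d
      rw [← hφ d, ← Set.image_comp]
      have : (⇑φ.symm ∘ ⇑φ) = id := funext fun x => φ.symm_apply_apply x
      rw [this, Set.image_id]
    -- k' = k''
    have hk1 : k' ≤ k'' := top_le φ hφ hBb r0 u0 hr0 hu0
    have hk2 : k'' ≤ k' := top_le φ.symm hφsymm hAb r0' u0' hr0' hu0'
    have hkk : k' = k'' := le_antisymm hk1 hk2
    subst hkk
    refine ⟨rfl, ?_⟩
    -- dimension comparison
    have hcard : ∀ i : ℕ, i ≤ k' → a k' * a i = b k' * b i := by
      intro i hi
      have hfr := finrank_block_eq hn φ hφ k' hAb hBb u0 hu0 u0' hu0' (i : ℤ)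
      rw [finrank_blockSub, finrank_blockSub, hAc k' le_rfl, hAc i hi,
        hBc k' le_rfl, hBc i hi] at hfr
      exact hfr
    have htop : a k' = b k' := by
      have := hcard k' le_rfl
      exact Nat.mul_self_inj.mp this
    intro i hi
    have := hcard i hi
    rw [htop] at this
    exact Nat.eq_of_mul_eq_mul_left hbk this
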